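/- Let Π₀ and Π₁ be orthogonal projections on an N-dimensional complex Hilbert space H. Then there exists an orthogonal decomposition of H into two-dimensional subspaces S_j (j = 1,…,ℓ) and N − 2ℓ one-dimensional subspaces T_j^{(bc)} indexed by b,c ∈ {0,1}, such that: (1) each S_j admits orthonormal bases (|α_j⟩, |α_j^⊥⟩) and (|β_j⟩, |β_j^⊥⟩) with Π₀|α_j⟩ = |α_j⟩, Π₀|α_j^⊥⟩ = 0, Π₁|β_j⟩ = |β_j⟩, Π₁|β_j^⊥⟩ = 0, and setting p_j := ⟨α_j|Π₁|α_j⟩, one has 0 < p_j < 1, |α_j⟩ = √p_j |β_j⟩ + √(1−p_j) |β_j^⊥⟩, and |β_j⟩ = √p_j |α_j⟩ + √(1−p_j) |α_j^⊥⟩; (2) each T_j^{(bc)} is spanned by a unit vector |α_j^{(bc)}⟩ with Π₀|α_j^{(bc)}⟩ = b·|α_j^{(bc)}⟩ and Π₁|α_j^{(bc)}⟩ = c·|α_j^{(bc)}⟩. -/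

import Mathlib

open scoped ComplexInnerProductSpace

set_option maxHeartbeats 1600000

open scoped ComplexInnerProductSpace

section Helpers
variable {E : Type*} [NormedAddCommGroup E] [InnerProductSpace ℂ E]

lemma orthonormal_sum_elim {ι κ : Type*} {f : ι → E} {g : κ → E}
    (hf : Orthonormal ℂ f) (hg : Orthonormal ℂ g) (h : ∀ i j, ⟪f i, g j⟫ = 0) :
    Orthonormal ℂ (Sum.elim f g) := by
  classical
  rw [orthonormal_iff_ite] at hf hg ⊢
  rintro (i | i) (j | j)
  · simpa [Sum.inl.injEq] using hf i j
  · simpa using h i j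
  · simpa using inner_eq_zero_symm.mp (h j i)
  · simpa [Sum.inr.injEq] using hg i j

lemma orthonormal_single {w : E} (hw : ‖w‖ = 1) :
    Orthonormal ℂ (fun _ : Unit => w) := by
  rw [orthonormal_iff_ite]
  rintro ⟨⟩ ⟨⟩
  simp [inner_self_eq_norm_sq_to_K, hw]

lemma span_stable {P : E →ₗ[ℂ] E} {s : Set E} (h : ∀ x ∈ s, P x ∈ Submodule.span ℂ s) :
    ∀ v ∈ Submodule.span ℂ s, P v ∈ Submodule.span ℂ s := by
  intro v hv
  have : (Submodule.span ℂ s).map P ≤ Submodule.span ℂ s := by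
    rw [Submodule.map_span]
    exact Submodule.span_le.mpr (by rintro _ ⟨x, hx, rfl⟩; exact h x hx)
  exact this ⟨v, hv, rfl⟩

lemma finrank_span_pair_orthonormal {a b : E} (ha : ‖a‖ = 1) (hb : ‖b‖ = 1) (hab : ⟪a, b⟫ = 0) :
    Module.finrank ℂ (Submodule.span ℂ ({a, b} : Set E)) = 2 := by
  have hb0 : b ≠ 0 := by intro h; rw [h] at hb; simp at hb
  have hli : LinearIndependent ℂ ![a, b] := by
    rw [linearIndependent_fin2]
    refine ⟨by simpa using hb0, fun c hc => ?_⟩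
    simp only [Matrix.cons_val_one, Matrix.head_cons, Matrix.cons_val_zero] at hc
    have : ⟪a, c • b⟫ = ⟪a, a⟫ := by rw [hc]
    rw [inner_smul_right, hab, inner_self_eq_norm_sq_to_K, ha] at this
    simp at this
  have := finrank_span_eq_card hli
  rw [show Set.range ![a, b] = ({a, b} : Set E) by
    ext x; simp [Matrix.range_cons, Matrix.range_empty]; tauto] at this
  simpa using this

end Helpers

section Jordan
variable {E : Type*} [NormedAddCommGroup E] [InnerProductSpace ℂ E]
variable (P0 P1 : E →ₗ[ℂ] E)

/-- The inductive invariant: `V` admits a Jordan-type decomposition with `n` total dimensions. -/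
def JGood (V : Submodule ℂ E) (n : ℕ) : Prop :=
  ∃ (ιS ιT : Type) (_ : Fintype ιS) (_ : Fintype ιT) (lab : ιT → Bool × Bool)
    (α αp β βp : ιS → E) (τ : ιT → E),
    2 * Fintype.card ιS + Fintype.card ιT = n ∧
    Orthonormal ℂ (Sum.elim (Sum.elim α αp) τ) ∧
    Submodule.span ℂ (Set.range (Sum.elim (Sum.elim α αp) τ)) = V ∧
    (∀ j, P0 (α j) = α j ∧ P0 (αp j) = 0 ∧
      P1 (β j) = β j ∧ P1 (βp j) = 0 ∧
      ‖β j‖ = 1 ∧ ‖βp j‖ = 1 ∧ ⟪β j, βp j⟫ = 0 ∧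
      β j ∈ Submodule.span ℂ {α j, αp j} ∧ βp j ∈ Submodule.span ℂ {α j, αp j} ∧
      (0 < (⟪α j, P1 (α j)⟫).re ∧ (⟪α j, P1 (α j)⟫).re < 1) ∧
      α j = (Real.sqrt ((⟪α j, P1 (α j)⟫).re) : ℂ) • β j
            + (Real.sqrt (1 - (⟪α j, P1 (α j)⟫).re) : ℂ) • βp j ∧
      β j = (Real.sqrt ((⟪α j, P1 (α j)⟫).re) : ℂ) • α j
            + (Real.sqrt (1 - (⟪α j, P1 (α j)⟫).re) : ℂ) • αp j) ∧
    (∀ j, ‖τ j‖ = 1 ∧ P0 (τ j) = (if (lab j).1 then (1:ℂ) else 0) • τ j ∧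
      P1 (τ j) = (if (lab j).2 then (1:ℂ) else 0) • τ j)

lemma JGood.addT {V : Submodule ℂ E} {n : ℕ} (h : JGood P0 P1 V n) (w : E) (b c : Bool)
    (hw : ‖w‖ = 1) (horth : ∀ v ∈ V, ⟪w, v⟫ = 0)
    (h0 : P0 w = (if b then (1:ℂ) else 0) • w) (h1 : P1 w = (if c then (1:ℂ) else 0) • w) :
    JGood P0 P1 ((ℂ ∙ w) ⊔ V) (n + 1) := by
  classical
  obtain ⟨ιS, ιT, hfS, hfT, lab, α, αp, β, βp, τ, hcount, hON, hspan, hc1, hc2⟩ := h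
  letI := hfS; letI := hfT
  set F := Sum.elim (Sum.elim α αp) τ with hF
  have hmem : ∀ i, F i ∈ V := fun i => hspan ▸ Submodule.subset_span (Set.mem_range_self i)
  have hwF : ∀ i, ⟪w, F i⟫ = 0 := fun i => horth _ (hmem i)
  refine ⟨ιS, Unit ⊕ ιT, hfS, inferInstance, Sum.elim (fun _ => (b, c)) lab,
    α, αp, β, βp, Sum.elim (fun _ => w) τ, ?_, ?_, ?_, hc1, ?_⟩
  · simp only [Fintype.card_sum, Fintype.card_unit]; omega
  · have honτ : Orthonormal ℂ (Sum.elim (fun _ : Unit => w) τ) :=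
      orthonormal_sum_elim (orthonormal_single hw) (hON.comp Sum.inr Sum.inr_injective)
        (fun _ j => hwF (Sum.inr j))
    refine orthonormal_sum_elim (hON.comp Sum.inl Sum.inl_injective) honτ ?_
    rintro i (j | j)
    · exact inner_eq_zero_symm.mp (hwF (Sum.inl i))
    · have := orthonormal_iff_ite.mp hON (Sum.inl i) (Sum.inr j)
      simpa [hF] using this
  · have hr : Set.range (Sum.elim (Sum.elim α αp) (Sum.elim (fun _ : Unit => w) τ))
        = {w} ∪ Set.range F := by
      simp only [hF, Set.Sum.elim_range, Set.range_const]
      rw [Set.union_left_comm, Set.union_assoc]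
    rw [hr, Submodule.span_union, hspan]
  · rintro (j | j)
    · exact ⟨hw, h0, h1⟩
    · exact hc2 j

lemma JGood.addS {V : Submodule ℂ E} {n : ℕ} (h : JGood P0 P1 V n) (a ap bb bp : E)
    (ha : ‖a‖ = 1) (hap : ‖ap‖ = 1) (haap : ⟪a, ap⟫ = 0)
    (horth : ∀ v ∈ V, ⟪a, v⟫ = 0 ∧ ⟪ap, v⟫ = 0)
    (hcond : P0 a = a ∧ P0 ap = 0 ∧
      P1 bb = bb ∧ P1 bp = 0 ∧
      ‖bb‖ = 1 ∧ ‖bp‖ = 1 ∧ ⟪bb, bp⟫ = 0 ∧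
      bb ∈ Submodule.span ℂ {a, ap} ∧ bp ∈ Submodule.span ℂ {a, ap} ∧
      (0 < (⟪a, P1 a⟫).re ∧ (⟪a, P1 a⟫).re < 1) ∧
      a = (Real.sqrt ((⟪a, P1 a⟫).re) : ℂ) • bb
            + (Real.sqrt (1 - (⟪a, P1 a⟫).re) : ℂ) • bp ∧
      bb = (Real.sqrt ((⟪a, P1 a⟫).re) : ℂ) • a
            + (Real.sqrt (1 - (⟪a, P1 a⟫).re) : ℂ) • ap) :
    JGood P0 P1 (Submodule.span ℂ {a, ap} ⊔ V) (n + 2) := by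
  classical
  obtain ⟨ιS, ιT, hfS, hfT, lab, α, αp, β, βp, τ, hcount, hON, hspan, hc1, hc2⟩ := h
  letI := hfS; letI := hfT
  set F := Sum.elim (Sum.elim α αp) τ with hF
  have hmem : ∀ i, F i ∈ V := fun i => hspan ▸ Submodule.subset_span (Set.mem_range_self i)
  have haF : ∀ i, ⟪a, F i⟫ = 0 := fun i => (horth _ (hmem i)).1
  have hapF : ∀ i, ⟪ap, F i⟫ = 0 := fun i => (horth _ (hmem i)).2
  have hite := orthonormal_iff_ite.mp hON
  refine ⟨Unit ⊕ ιS, ιT, inferInstance, hfT, lab,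
    Sum.elim (fun _ => a) α, Sum.elim (fun _ => ap) αp,
    Sum.elim (fun _ => bb) β, Sum.elim (fun _ => bp) βp, τ, ?_, ?_, ?_, ?_, hc2⟩
  · simp only [Fintype.card_sum, Fintype.card_unit]; omega
  · have honα : Orthonormal ℂ (Sum.elim (fun _ : Unit => a) α) :=
      orthonormal_sum_elim (orthonormal_single ha)
        (hON.comp (Sum.inl ∘ Sum.inl) (Sum.inl_injective.comp Sum.inl_injective))
        (fun _ j => haF (Sum.inl (Sum.inl j)))
    have honαp : Orthonormal ℂ (Sum.elim (fun _ : Unit => ap) αp) :=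
      orthonormal_sum_elim (orthonormal_single hap)
        (hON.comp (Sum.inl ∘ Sum.inr) (Sum.inl_injective.comp Sum.inr_injective))
        (fun _ j => hapF (Sum.inl (Sum.inr j)))
    have honS : Orthonormal ℂ
        (Sum.elim (Sum.elim (fun _ : Unit => a) α) (Sum.elim (fun _ : Unit => ap) αp)) := by
      refine orthonormal_sum_elim honα honαp ?_
      rintro (i | i) (j | j)
      · exact haap
      · exact haF (Sum.inl (Sum.inr j))
      · exact inner_eq_zero_symm.mp (hapF (Sum.inl (Sum.inl i)))
      · simpa [hF] using hite (Sum.inl (Sum.inl i)) (Sum.inl (Sum.inr j))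
    refine orthonormal_sum_elim honS (hON.comp Sum.inr Sum.inr_injective) ?_
    rintro ((i | i) | (i | i)) j
    · exact haF (Sum.inr j)
    · simpa [hF] using hite (Sum.inl (Sum.inl i)) (Sum.inr j)
    · exact hapF (Sum.inr j)
    · simpa [hF] using hite (Sum.inl (Sum.inr i)) (Sum.inr j)
  · have hr : Set.range (Sum.elim
        (Sum.elim (Sum.elim (fun _ : Unit => a) α) (Sum.elim (fun _ : Unit => ap) αp)) τ)
        = ({a, ap} : Set E) ∪ Set.range F := by
      simp only [hF, Set.Sum.elim_range, Set.range_const]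
      ext x
      simp only [Set.mem_union, Set.mem_singleton_iff, Set.mem_insert_iff, Set.mem_range]
      tauto
    rw [hr, Submodule.span_union, hspan]
  · rintro (j | j)
    · exact hcond
    · exact hc1 j

end Jordan

section Main
variable {E : Type*} [NormedAddCommGroup E] [InnerProductSpace ℂ E]
variable {P0 P1 : E →ₗ[ℂ] E}

lemma norm_eq_one_of_inner_self {x : E} (h : ⟪x, x⟫ = 1) : ‖x‖ = 1 := by
  have h2 := inner_self_eq_norm_mul_norm (𝕜 := ℂ) x
  rw [h] at h2
  simp only [RCLike.one_re] at h2
  nlinarith [norm_nonneg x]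

lemma jmain [FiniteDimensional ℂ E]
    (hP0idem : P0 ∘ₗ P0 = P0) (hP0sym : P0.IsSymmetric)
    (hP1idem : P1 ∘ₗ P1 = P1) (hP1sym : P1.IsSymmetric) :
    ∀ (n : ℕ) (V : Submodule ℂ E), (∀ v ∈ V, P0 v ∈ V) → (∀ v ∈ V, P1 v ∈ V) →
      Module.finrank ℂ V = n → JGood P0 P1 V n := by
  have hi0 : ∀ x, P0 (P0 x) = P0 x := fun x => DFunLike.congr_fun hP0idem x
  have hi1 : ∀ x, P1 (P1 x) = P1 x := fun x => DFunLike.congr_fun hP1idem x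
  intro n
  induction n using Nat.strong_induction_on with
  | _ n IH =>
  intro V hV0 hV1 hrank
  by_cases hVbot : V = ⊥
  · subst hVbot
    rw [finrank_bot] at hrank
    subst hrank
    refine ⟨Empty, Empty, inferInstance, inferInstance, fun j => j.elim, fun j => j.elim,
      fun j => j.elim, fun j => j.elim, fun j => j.elim, fun j => j.elim, by simp, ?_, ?_,
      fun j => j.elim, fun j => j.elim⟩
    · rw [orthonormal_iff_ite]
      rintro (⟨i | i⟩ | i) <;> exact i.elim
    · rw [Set.range_eq_empty, Submodule.span_empty]
  -- shared tail for one-dimensional pieces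
  have tailT : ∀ (w : E) (b c : Bool), w ∈ V → ‖w‖ = 1 →
      P0 w = (if b then (1:ℂ) else 0) • w → P1 w = (if c then (1:ℂ) else 0) • w →
      JGood P0 P1 V n := by
    intro w b c hwV hw h0 h1
    have hw0 : w ≠ 0 := by intro h; rw [h] at hw; simp at hw
    set W : Submodule ℂ E := ℂ ∙ w with hWdef
    have hWV : W ≤ V := (Submodule.span_singleton_le_iff_mem w V).mpr hwV
    have hWrank : Module.finrank ℂ W = 1 := finrank_span_singleton hw0
    have hwW : w ∈ W := Submodule.mem_span_singleton_self w
    have hW0 : ∀ u ∈ W, P0 u ∈ W := by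
      intro u hu; obtain ⟨z, rfl⟩ := Submodule.mem_span_singleton.mp hu
      rw [map_smul, h0]
      exact Submodule.smul_mem _ _ (Submodule.smul_mem _ _ hwW)
    have hW1 : ∀ u ∈ W, P1 u ∈ W := by
      intro u hu; obtain ⟨z, rfl⟩ := Submodule.mem_span_singleton.mp hu
      rw [map_smul, h1]
      exact Submodule.smul_mem _ _ (Submodule.smul_mem _ _ hwW)
    set V'' : Submodule ℂ E := Wᗮ ⊓ V with hV''def
    have hsup : W ⊔ V'' = V := Submodule.sup_orthogonal_inf_of_hasOrthogonalProjection hWV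
    have hdisj : W ⊓ V'' = ⊥ := by
      rw [eq_bot_iff]
      intro x hx
      exact (Submodule.orthogonal_disjoint W).le_bot ⟨hx.1, hx.2.1⟩
    have hrk := Submodule.finrank_sup_add_finrank_inf_eq W V''
    rw [hsup, hdisj, finrank_bot, hWrank, hrank] at hrk
    have hV''0 : ∀ v ∈ V'', P0 v ∈ V'' := by
      intro v hv
      rw [Submodule.mem_inf] at hv ⊢
      obtain ⟨hv1, hv2⟩ := hv
      refine ⟨?_, hV0 v hv2⟩
      rw [Submodule.mem_orthogonal] at hv1 ⊢
      intro u hu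
      rw [← hP0sym u v]
      exact hv1 _ (hW0 u hu)
    have hV''1 : ∀ v ∈ V'', P1 v ∈ V'' := by
      intro v hv
      rw [Submodule.mem_inf] at hv ⊢
      obtain ⟨hv1, hv2⟩ := hv
      refine ⟨?_, hV1 v hv2⟩
      rw [Submodule.mem_orthogonal] at hv1 ⊢
      intro u hu
      rw [← hP1sym u v]
      exact hv1 _ (hW1 u hu)
    have hIH := IH (n - 1) (by omega) V'' hV''0 hV''1 (by omega)
    have horthW : ∀ v ∈ V'', ⟪w, v⟫ = 0 := fun v hv =>
      (Submodule.mem_orthogonal W v).mp ((Submodule.mem_inf.mp hv).1) w hwW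
    have := hIH.addT P0 P1 w b c hw horthW h0 h1
    rw [show n - 1 + 1 = n by omega, hsup] at this
    exact this
  -- shared tail for two-dimensional pieces
  have tailS : ∀ (a ap bb bp : E), a ∈ V → ap ∈ V → ‖a‖ = 1 → ‖ap‖ = 1 → ⟪a, ap⟫ = 0 →
      P1 a ∈ Submodule.span ℂ ({a, ap} : Set E) → P1 ap ∈ Submodule.span ℂ ({a, ap} : Set E) →
      (P0 a = a ∧ P0 ap = 0 ∧
        P1 bb = bb ∧ P1 bp = 0 ∧
        ‖bb‖ = 1 ∧ ‖bp‖ = 1 ∧ ⟪bb, bp⟫ = 0 ∧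
        bb ∈ Submodule.span ℂ {a, ap} ∧ bp ∈ Submodule.span ℂ {a, ap} ∧
        (0 < (⟪a, P1 a⟫).re ∧ (⟪a, P1 a⟫).re < 1) ∧
        a = (Real.sqrt ((⟪a, P1 a⟫).re) : ℂ) • bb
              + (Real.sqrt (1 - (⟪a, P1 a⟫).re) : ℂ) • bp ∧
        bb = (Real.sqrt ((⟪a, P1 a⟫).re) : ℂ) • a
              + (Real.sqrt (1 - (⟪a, P1 a⟫).re) : ℂ) • ap) →
      JGood P0 P1 V n := by
    intro a ap bb bp haV hapV ha hap haap hP1a hP1ap hcond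
    set W : Submodule ℂ E := Submodule.span ℂ ({a, ap} : Set E) with hWdef
    have haW : a ∈ W := Submodule.subset_span (by simp)
    have hapW : ap ∈ W := Submodule.subset_span (by simp)
    have hWV : W ≤ V := by
      rw [hWdef, Submodule.span_le]
      rintro x (rfl | rfl) <;> assumption
    have hWrank : Module.finrank ℂ W = 2 := finrank_span_pair_orthonormal ha hap haap
    have hW0 : ∀ u ∈ W, P0 u ∈ W := by
      refine span_stable ?_
      rintro x (rfl | rfl)
      · rw [hcond.1]; exact haW
      · rw [hcond.2.1]; exact Submodule.zero_mem _
    have hW1 : ∀ u ∈ W, P1 u ∈ W := by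
      refine span_stable ?_
      rintro x (rfl | rfl) <;> assumption
    set V'' : Submodule ℂ E := Wᗮ ⊓ V with hV''def
    have hsup : W ⊔ V'' = V := Submodule.sup_orthogonal_inf_of_hasOrthogonalProjection hWV
    have hdisj : W ⊓ V'' = ⊥ := by
      rw [eq_bot_iff]
      intro x hx
      exact (Submodule.orthogonal_disjoint W).le_bot ⟨hx.1, hx.2.1⟩
    have hrk := Submodule.finrank_sup_add_finrank_inf_eq W V''
    rw [hsup, hdisj, finrank_bot, hWrank, hrank] at hrk
    have hV''0 : ∀ v ∈ V'', P0 v ∈ V'' := by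
      intro v hv
      rw [Submodule.mem_inf] at hv ⊢
      obtain ⟨hv1, hv2⟩ := hv
      refine ⟨?_, hV0 v hv2⟩
      rw [Submodule.mem_orthogonal] at hv1 ⊢
      intro u hu
      rw [← hP0sym u v]
      exact hv1 _ (hW0 u hu)
    have hV''1 : ∀ v ∈ V'', P1 v ∈ V'' := by
      intro v hv
      rw [Submodule.mem_inf] at hv ⊢
      obtain ⟨hv1, hv2⟩ := hv
      refine ⟨?_, hV1 v hv2⟩
      rw [Submodule.mem_orthogonal] at hv1 ⊢
      intro u hu
      rw [← hP1sym u v]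
      exact hv1 _ (hW1 u hu)
    have hIH := IH (n - 2) (by omega) V'' hV''0 hV''1 (by omega)
    have horthW : ∀ v ∈ V'', ⟪a, v⟫ = 0 ∧ ⟪ap, v⟫ = 0 := fun v hv =>
      ⟨(Submodule.mem_orthogonal W v).mp ((Submodule.mem_inf.mp hv).1) a haW,
       (Submodule.mem_orthogonal W v).mp ((Submodule.mem_inf.mp hv).1) ap hapW⟩
    have := hIH.addS P0 P1 a ap bb bp ha hap haap horthW hcond
    rw [show n - 2 + 2 = n by omega, hsup] at this
    exact this
  -- the fixed space of P0 inside V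
  set K : Submodule ℂ E := V ⊓ LinearMap.ker (P0 - LinearMap.id) with hKdef
  have hKmem : ∀ v, v ∈ K ↔ v ∈ V ∧ P0 v = v := by
    intro v
    simp [hKdef, Submodule.mem_inf, LinearMap.mem_ker, sub_eq_zero, LinearMap.sub_apply]
  by_cases hK : K = ⊥
  · -- P0 vanishes on V
    have hP0V : ∀ v ∈ V, P0 v = 0 := by
      intro v hv
      have : P0 v ∈ K := (hKmem _).mpr ⟨hV0 v hv, hi0 v⟩
      rwa [hK, Submodule.mem_bot] at this
    obtain ⟨v, hvV, hv0⟩ := Submodule.exists_mem_ne_zero_of_ne_bot hVbot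
    by_cases hp1 : P1 v = 0
    · refine tailT (((‖v‖ : ℂ))⁻¹ • v) false false
        (Submodule.smul_mem _ _ hvV) (norm_smul_inv_norm hv0) ?_ ?_
      · rw [map_smul, hP0V v hvV]; simp
      · rw [map_smul, hp1]; simp
    · have huV : P1 v ∈ V := hV1 v hvV
      refine tailT (((‖P1 v‖ : ℂ))⁻¹ • P1 v) false true
        (Submodule.smul_mem _ _ huV) (norm_smul_inv_norm hp1) ?_ ?_
      · rw [map_smul, hP0V _ huV]; simp
      · rw [map_smul, hi1]; simp
  · -- K ≠ ⊥ : find an eigenvector of P0 P1 restricted to K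
    haveI : Nontrivial K := Submodule.nontrivial_iff_ne_bot.mpr hK
    have hmapsK : ∀ x ∈ K, (P0 ∘ₗ P1) x ∈ K := by
      intro x hx
      exact (hKmem _).mpr ⟨hV0 _ (hV1 x ((hKmem x).mp hx).1), hi0 _⟩
    obtain ⟨μ, hμ⟩ := Module.End.exists_eigenvalue ((P0 ∘ₗ P1).restrict hmapsK)
    obtain ⟨v, hv⟩ := hμ.exists_hasEigenvector
    have hvne : (v : E) ≠ 0 := fun h => hv.2 (by exact_mod_cast Subtype.ext h)
    have hvV : (v : E) ∈ V := ((hKmem v).mp v.2).1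
    have hvfix : P0 (v : E) = v := ((hKmem v).mp v.2).2
    have heig : P0 (P1 (v : E)) = μ • (v : E) := by
      have h := congrArg (Subtype.val) hv.apply_eq_smul
      rw [LinearMap.restrict_coe_apply] at h
      exact h
    set α : E := ((‖(v : E)‖ : ℂ))⁻¹ • (v : E) with hαdef
    have hαV : α ∈ V := Submodule.smul_mem _ _ hvV
    have hα : ‖α‖ = 1 := norm_smul_inv_norm hvne
    have hαfix : P0 α = α := by rw [hαdef, map_smul, hvfix]
    have hαeig : P0 (P1 α) = μ • α := by
      rw [hαdef, map_smul, map_smul, heig, smul_comm]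
    have hαα : ⟪α, α⟫ = 1 := by
      rw [inner_self_eq_norm_sq_to_K, hα]; simp
    have h2 : ⟪α, P1 α⟫ = μ := by
      calc ⟪α, P1 α⟫ = ⟪P0 α, P1 α⟫ := by rw [hαfix]
        _ = ⟪α, P0 (P1 α)⟫ := hP0sym α (P1 α)
        _ = μ * ⟪α, α⟫ := by rw [hαeig, inner_smul_right]
        _ = μ := by rw [hαα, mul_one]
    have h3 : ⟪P1 α, P1 α⟫ = μ := by
      calc ⟪P1 α, P1 α⟫ = ⟪α, P1 (P1 α)⟫ := hP1sym α (P1 α)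
        _ = ⟪α, P1 α⟫ := by rw [hi1]
        _ = μ := h2
    set p : ℝ := ‖P1 α‖ ^ 2 with hpdef
    have hμp : μ = (p : ℂ) := by
      rw [← h3, inner_self_eq_norm_sq_to_K, hpdef]
      norm_cast
    have hre : (⟪α, P1 α⟫).re = p := by rw [h2, hμp, Complex.ofReal_re]
    have hp0 : 0 ≤ p := sq_nonneg _
    have hp1le : p ≤ 1 := by
      have hcs := re_inner_le_norm (𝕜 := ℂ) α (P1 α)
      rw [h2, hμp, hα, one_mul] at hcs
      have hcs' : p ≤ ‖P1 α‖ := by simpa using hcs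
      nlinarith [norm_nonneg (P1 α)]
    by_cases hpz : p = 0
    · have hz : P1 α = 0 := by
        rw [← norm_eq_zero]
        nlinarith [hpdef, hpz]
      refine tailT α true false hαV hα ?_ ?_
      · rw [hαfix]; simp
      · rw [hz]; simp
    by_cases hpo : p = 1
    · have hfix1 : P1 α = α := by
        have hre' : (⟪P1 α, α⟫ : ℂ).re = (1:ℝ) := by
          have hc : ⟪P1 α, α⟫ = (starRingEnd ℂ) ⟪α, P1 α⟫ := (inner_conj_symm _ _).symm
          rw [h2, hμp, hpo] at hc
          simp [hc]
        have hnn : ‖P1 α - α‖ ^ 2 = 0 := by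
          rw [norm_sub_sq (𝕜 := ℂ)]
          simp only [RCLike.re_to_complex]
          rw [hre', hα]
          nlinarith [hpdef, hpo]
        have h5 := pow_eq_zero_iff (n := 2) (by norm_num) |>.mp hnn
        rw [norm_eq_zero, sub_eq_zero] at h5
        exact h5
      refine tailT α true true hαV hα ?_ ?_
      · rw [hαfix]; simp
      · rw [hfix1]; simp
    · -- the genuinely two-dimensional case
      have hppos : 0 < p := lt_of_le_of_ne hp0 (Ne.symm hpz)
      have hplt1 : p < 1 := lt_of_le_of_ne hp1le hpo
      set s : ℝ := Real.sqrt p with hsdef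
      set t : ℝ := Real.sqrt (1 - p) with htdef
      have hs2 : s ^ 2 = p := Real.sq_sqrt hp0
      have ht2 : t ^ 2 = 1 - p := Real.sq_sqrt (by linarith)
      have hspos : 0 < s := Real.sqrt_pos.mpr hppos
      have htpos : 0 < t := Real.sqrt_pos.mpr (by linarith)
      have hS2 : ((s:ℝ):ℂ)^2 = ((p:ℝ):ℂ) := by rw [← hs2]; push_cast; ring
      have hT2 : ((t:ℝ):ℂ)^2 = 1 - ((p:ℝ):ℂ) := by
        rw [show (1:ℂ) - ((p:ℝ):ℂ) = (((1 - p : ℝ)):ℂ) by push_cast; ring, ← ht2]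
        push_cast; ring
      have hSne : ((s:ℝ):ℂ) ≠ 0 := by exact_mod_cast hspos.ne'
      have hTne : ((t:ℝ):ℂ) ≠ 0 := by exact_mod_cast htpos.ne'
      set β : E := ((s:ℝ):ℂ)⁻¹ • P1 α with hβdef
      set αp : E := ((t:ℝ):ℂ)⁻¹ • (β - ((s:ℝ):ℂ) • α) with hαpdef
      set βp : E := ((t:ℝ):ℂ)⁻¹ • (α - ((s:ℝ):ℂ) • β) with hβpdef
      clear_value α p s t β αp βp
      -- operator identities
      have hP1β : P1 β = β := by rw [hβdef, map_smul, hi1]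
      have hP0β : P0 β = ((s:ℝ):ℂ) • α := by
        rw [hβdef, map_smul, hαeig, hμp, smul_smul]
        congr 1
        field_simp
        linear_combination -hS2
      have hP1αsβ : P1 α = ((s:ℝ):ℂ) • β := by
        rw [hβdef, smul_inv_smul₀ hSne]
      have hP0αp : P0 αp = 0 := by
        rw [hαpdef, map_smul, map_sub, map_smul, hP0β, hαfix]
        simp
      have hP1βp : P1 βp = 0 := by
        rw [hβpdef, map_smul, map_sub, map_smul, hP1β, hP1αsβ]
        simp
      -- inner product identities
      have hαP1α : ⟪α, P1 α⟫ = ((p:ℝ):ℂ) := by rw [h2, hμp]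
      have hP1αα : ⟪P1 α, α⟫ = ((p:ℝ):ℂ) := by
        rw [← inner_conj_symm, hαP1α, Complex.conj_ofReal]
      have hP1P1 : ⟪P1 α, P1 α⟫ = ((p:ℝ):ℂ) := by rw [h3, hμp]
      have hαβ : ⟪α, β⟫ = ((s:ℝ):ℂ) := by
        rw [hβdef, inner_smul_right, hαP1α]
        field_simp
        linear_combination -hS2
      have hβα : ⟪β, α⟫ = ((s:ℝ):ℂ) := by
        rw [← inner_conj_symm, hαβ, Complex.conj_ofReal]
      have hββ : ⟪β, β⟫ = 1 := by
        rw [hβdef, inner_smul_left, inner_smul_right, hP1P1, map_inv₀, Complex.conj_ofReal]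
        field_simp
        linear_combination -hS2
      have hβn : ‖β‖ = 1 := norm_eq_one_of_inner_self hββ
      have hααp : ⟪α, αp⟫ = 0 := by
        rw [hαpdef, inner_smul_right, inner_sub_right, inner_smul_right, hαβ, hαα]
        ring_nf
      have hαpα : ⟪αp, α⟫ = 0 := by
        rw [← inner_conj_symm, hααp, map_zero]
      have hαpαp : ⟪αp, αp⟫ = 1 := by
        rw [hαpdef]
        simp only [inner_smul_left, inner_smul_right, inner_sub_left, inner_sub_right,
          hββ, hβα, hαβ, hαα, map_inv₀, Complex.conj_ofReal]
        field_simp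
        linear_combination -hS2 - hT2
      have hαpn : ‖αp‖ = 1 := norm_eq_one_of_inner_self hαpαp
      -- combo identities
      have hβcomb : β = ((s:ℝ):ℂ) • α + ((t:ℝ):ℂ) • αp := by
        rw [hαpdef, smul_inv_smul₀ hTne]
        abel
      have hβpcomb : βp = ((t:ℝ):ℂ) • α - ((s:ℝ):ℂ) • αp := by
        rw [hβpdef]
        nth_rewrite 1 [hβcomb]
        match_scalars
        · field_simp
          linear_combination -hS2 - hT2
        · field_simp
      have hαcomb : α = ((s:ℝ):ℂ) • β + ((t:ℝ):ℂ) • βp := by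
        rw [hβcomb, hβpcomb]
        match_scalars
        · linear_combination -hS2 - hT2
        · ring
      have hP1αp : P1 αp = ((t:ℝ):ℂ) • β := by
        rw [hαpdef, map_smul, map_sub, map_smul, hP1β, hP1αsβ, smul_smul]
        match_scalars
        field_simp
        linear_combination -hS2 - hT2
      -- inner products involving βp
      have hββp : ⟪β, βp⟫ = 0 := by
        rw [hβcomb, hβpcomb]
        simp only [inner_add_left, inner_add_right, inner_sub_left, inner_sub_right,
          inner_smul_left, inner_smul_right, hαα, hααp, hαpα, hαpαp,
          Complex.conj_ofReal]
        ring
      have hβpβp : ⟪βp, βp⟫ = 1 := by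
        rw [hβpcomb]
        simp only [inner_add_left, inner_add_right, inner_sub_left, inner_sub_right,
          inner_smul_left, inner_smul_right, hαα, hααp, hαpα, hαpαp,
          Complex.conj_ofReal]
        linear_combination hS2 + hT2
      have hβpn : ‖βp‖ = 1 := norm_eq_one_of_inner_self hβpβp
      -- memberships
      have hαpV : αp ∈ V := by
        rw [hαpdef, hβdef]
        exact Submodule.smul_mem _ _ (Submodule.sub_mem _
          (Submodule.smul_mem _ _ (hV1 α hαV)) (Submodule.smul_mem _ _ hαV))
      have hαW : α ∈ Submodule.span ℂ ({α, αp} : Set E) :=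
        Submodule.subset_span (by simp)
      have hαpW : αp ∈ Submodule.span ℂ ({α, αp} : Set E) :=
        Submodule.subset_span (by simp)
      have hβW : β ∈ Submodule.span ℂ ({α, αp} : Set E) := by
        rw [hβcomb]
        exact Submodule.add_mem _ (Submodule.smul_mem _ _ hαW) (Submodule.smul_mem _ _ hαpW)
      have hβpW : βp ∈ Submodule.span ℂ ({α, αp} : Set E) := by
        rw [hβpcomb]
        exact Submodule.sub_mem _ (Submodule.smul_mem _ _ hαW) (Submodule.smul_mem _ _ hαpW)
      have hsre : Real.sqrt ((⟪α, P1 α⟫).re) = s := by rw [hre, hsdef]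
      have htre : Real.sqrt (1 - (⟪α, P1 α⟫).re) = t := by rw [hre, htdef]
      refine tailS α αp β βp hαV hαpV hα hαpn hααp ?_ ?_ ?_
      · rw [hP1αsβ]
        exact Submodule.smul_mem _ _ hβW
      · rw [hP1αp]
        exact Submodule.smul_mem _ _ hβW
      · refine ⟨hαfix, hP0αp, hP1β, hP1βp, hβn, hβpn, hββp, hβW, hβpW, ?_, ?_, ?_⟩
        · rw [hre]; exact ⟨hppos, hplt1⟩
        · rw [hsre, htre]; exact hαcomb
        · rw [hsre, htre]; exact hβcomb

end Main

/-- Jordan's lemma: joint structure of two orthogonal projections on an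
`N`-dimensional complex Hilbert space. -/
theorem stmt1 {N : ℕ}
    (P0 P1 : EuclideanSpace ℂ (Fin N) →ₗ[ℂ] EuclideanSpace ℂ (Fin N))
    (hP0idem : P0 ∘ₗ P0 = P0) (hP0sym : P0.IsSymmetric)
    (hP1idem : P1 ∘ₗ P1 = P1) (hP1sym : P1.IsSymmetric) :
    ∃ (l : ℕ) (m : Bool → Bool → ℕ)
      (α αp β βp : Fin l → EuclideanSpace ℂ (Fin N))
      (τ : (b : Bool) → (c : Bool) → Fin (m b c) → EuclideanSpace ℂ (Fin N)),
      -- counting: the one-dimensional pieces account for the remaining N − 2ℓ dimensions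
      2 * l + (m false false + m false true + m true false + m true true) = N ∧
      -- the vectors α_j, α_j^⊥ together with the α_j^{(bc)} form an orthonormal basis of H,
      -- i.e. the subspaces S_j = span{α_j, α_j^⊥} and T_j^{(bc)} = span{α_j^{(bc)}}
      -- give an orthogonal decomposition of H
      Orthonormal ℂ
        (Sum.elim (Sum.elim α αp)
          (fun s : Σ bc : Bool × Bool, Fin (m bc.1 bc.2) => τ s.1.1 s.1.2 s.2)) ∧
      Submodule.span ℂ
        (Set.range (Sum.elim (Sum.elim α αp)
          (fun s : Σ bc : Bool × Bool, Fin (m bc.1 bc.2) => τ s.1.1 s.1.2 s.2))) = ⊤ ∧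
      -- (1) structure inside each two-dimensional subspace S_j
      (∀ j : Fin l,
        P0 (α j) = α j ∧ P0 (αp j) = 0 ∧
        P1 (β j) = β j ∧ P1 (βp j) = 0 ∧
        ‖β j‖ = 1 ∧ ‖βp j‖ = 1 ∧ ⟪β j, βp j⟫ = 0 ∧
        β j ∈ Submodule.span ℂ {α j, αp j} ∧ βp j ∈ Submodule.span ℂ {α j, αp j} ∧
        (0 < (⟪α j, P1 (α j)⟫).re ∧ (⟪α j, P1 (α j)⟫).re < 1) ∧
        α j = (Real.sqrt ((⟪α j, P1 (α j)⟫).re) : ℂ) • β j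
              + (Real.sqrt (1 - (⟪α j, P1 (α j)⟫).re) : ℂ) • βp j ∧
        β j = (Real.sqrt ((⟪α j, P1 (α j)⟫).re) : ℂ) • α j
              + (Real.sqrt (1 - (⟪α j, P1 (α j)⟫).re) : ℂ) • αp j) ∧
      -- (2) the one-dimensional subspaces T_j^{(bc)}
      (∀ (b c : Bool) (k : Fin (m b c)),
        ‖τ b c k‖ = 1 ∧
        P0 (τ b c k) = (if b then (1:ℂ) else 0) • τ b c k ∧
        P1 (τ b c k) = (if c then (1:ℂ) else 0) • τ b c k) := by
  classical
  have hgood : JGood P0 P1 (⊤ : Submodule ℂ (EuclideanSpace ℂ (Fin N))) N :=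
    jmain hP0idem hP0sym hP1idem hP1sym N ⊤ (fun v _ => trivial) (fun v _ => trivial)
      (by rw [finrank_top]; exact finrank_euclideanSpace_fin)
  obtain ⟨ιS, ιT, hfS, hfT, lab, α, αp, β, βp, τ, hcount, hON, hspan, hc1, hc2⟩ := hgood
  letI := hfS; letI := hfT
  set F := Sum.elim (Sum.elim α αp) τ with hFdef
  set l := Fintype.card ιS with hl
  set eS : Fin l ≃ ιS := (Fintype.equivFin ιS).symm with heS
  set m : Bool → Bool → ℕ := fun b c => Fintype.card {j : ιT // lab j = (b, c)} with hm
  have eT : ∀ b c : Bool, Fin (m b c) ≃ {j : ιT // lab j = (b, c)} := fun b c =>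
    (Fintype.equivFin _).symm
  set G : ((Fin l ⊕ Fin l) ⊕ (Σ bc : Bool × Bool, Fin (m bc.1 bc.2))) → ((ιS ⊕ ιS) ⊕ ιT) :=
    Sum.map (Sum.map eS eS) (fun s => (eT s.1.1 s.1.2 s.2 : ιT)) with hG
  have hGinj : Function.Injective G := by
    rintro ((x | x) | ⟨⟨b, c⟩, k⟩) ((y | y) | ⟨⟨b', c'⟩, k'⟩) h <;>
      simp only [hG, Sum.map_inl, Sum.map_inr, Sum.inl.injEq, Sum.inr.injEq] at h
    · rw [eS.injective h]
    · exact absurd h (by simp)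
    · exact absurd h (by simp)
    · exact absurd h (by simp)
    · rw [eS.injective h]
    · exact absurd h (by simp)
    · exact absurd h (by simp)
    · exact absurd h (by simp)
    · have hlabel : ((b, c) : Bool × Bool) = (b', c') := by
        rw [← (eT b c k).2, ← (eT b' c' k').2, h]
      obtain ⟨rfl, rfl⟩ := Prod.mk.injEq .. |>.mp hlabel
      have hk : k = k' := (eT b c).injective (Subtype.ext h)
      rw [hk]
  have hGsurj : Function.Surjective G := by
    rintro ((i | i) | j)
    · exact ⟨Sum.inl (Sum.inl (eS.symm i)), by simp [hG]⟩
    · exact ⟨Sum.inl (Sum.inr (eS.symm i)), by simp [hG]⟩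
    · refine ⟨Sum.inr ⟨lab j, (eT (lab j).1 (lab j).2).symm ⟨j, rfl⟩⟩, ?_⟩
      simp only [hG, Sum.map_inr, Sum.inr.injEq]
      rw [Equiv.apply_symm_apply]
  refine ⟨l, m, α ∘ eS, αp ∘ eS, β ∘ eS, βp ∘ eS, fun b c k => τ (eT b c k).1,
    ?_, ?_, ?_, ?_, ?_⟩
  · have hc4 : Fintype.card ιT = m false false + m false true + m true false + m true true := by
      rw [show Fintype.card ιT = Fintype.card (Σ bc : Bool × Bool, {j : ιT // lab j = bc}) from
        Fintype.card_congr (Equiv.sigmaFiberEquiv lab).symm]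
      rw [Fintype.card_sigma, Fintype.sum_prod_type, Fintype.sum_bool, Fintype.sum_bool,
        Fintype.sum_bool]
      simp only [hm]
      ring
    omega
  · have h2 : Orthonormal ℂ (F ∘ G) := hON.comp G hGinj
    convert h2 using 2
    funext x
    rcases x with ((i | i) | ⟨⟨b, c⟩, k⟩) <;> rfl
  · have hsp : Submodule.span ℂ (Set.range (F ∘ G)) = ⊤ := by
      rw [hGsurj.range_comp]; exact hspan
    convert hsp using 3
    funext x
    rcases x with ((i | i) | ⟨⟨b, c⟩, k⟩) <;> rfl
  · intro j
    exact hc1 (eS j)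
  · intro b c k
    have hlab : lab (eT b c k).1 = (b, c) := (eT b c k).2
    have h := hc2 (eT b c k).1
    rw [hlab] at h
    exact h
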